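/- arXiv:2101.11947 — 2 statements merged into one kernel-verified Lean document; each statement's English description precedes it below -/
import Mathlib

section
/- Let n, k, d, s be integers with n ≥ d ≥ 1 and k > s ≥ 0. Then g(n,k,d;s) ≥ 2^d·k − ⌊(k−s) / 2^(n−d)⌋. -/
open scoped Classical

noncomputable section

abbrev F2 : Type := ZMod 2

/-- Number of members of the multiset `H` (counted with multiplicity) containing `x`. -/
def covCount (n : ℕ) (H : Multiset (AffineSubspace F2 (Fin n → F2))) (x : Fin n → F2) : ℕ :=
  Multiset.countP (fun S => x ∈ S) H

/-- `H` is a (k,d)-cover of 𝔽₂ⁿ: a multiset of (n-d)-dimensional affine subspaces covering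
every nonzero point at least `k` times and the origin at most `k-1` times. -/
def IsCover (n k d : ℕ) (H : Multiset (AffineSubspace F2 (Fin n → F2))) : Prop :=
  (∀ S ∈ H, (S : Set (Fin n → F2)).Nonempty ∧ Module.finrank F2 S.direction = n - d) ∧
  (∀ x : Fin n → F2, x ≠ 0 → k ≤ covCount n H x) ∧
  covCount n H 0 < k

/-- `H` is a (k,d;s)-cover of 𝔽₂ⁿ: a (k,d)-cover in which the origin lies in exactly `s`
members (counted with multiplicity). -/
def IsCoverExact (n k d s : ℕ) (H : Multiset (AffineSubspace F2 (Fin n → F2))) : Prop :=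
  (∀ S ∈ H, (S : Set (Fin n → F2)).Nonempty ∧ Module.finrank F2 S.direction = n - d) ∧
  (∀ x : Fin n → F2, x ≠ 0 → k ≤ covCount n H x) ∧
  covCount n H 0 = s

/-- Minimum cardinality of a (k,d)-cover of 𝔽₂ⁿ. -/
def f (n k d : ℕ) : ℕ := sInf {m | ∃ H, IsCover n k d H ∧ Multiset.card H = m}

/-- Minimum cardinality of a (k,d;s)-cover of 𝔽₂ⁿ. -/
def g (n k d s : ℕ) : ℕ := sInf {m | ∃ H, IsCoverExact n k d s H ∧ Multiset.card H = m}

end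

open scoped Pointwise

section Aux

lemma countP_nsmul' {α : Type*} (p : α → Prop) [DecidablePred p] (k : ℕ) (m : Multiset α) :
    Multiset.countP p (k • m) = k * Multiset.countP p m := by
  induction k with
  | zero => simp
  | succ k ih => rw [succ_nsmul, Multiset.countP_add, ih]; ring

lemma countP_replicate' {α : Type*} (p : α → Prop) [DecidablePred p] (s : ℕ) (a : α) :
    Multiset.countP p (Multiset.replicate s a) = if p a then s else 0 := by
  induction s with
  | zero => simp
  | succ s ih =>
      rw [Multiset.replicate_succ, Multiset.countP_cons, ih]
      split <;> omega

lemma exists_avoid (n d : ℕ) (hd : 1 ≤ d) (hdn : d ≤ n) (x : Fin n → F2) (hx : x ≠ 0) :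
    ∃ U : Submodule F2 (Fin n → F2), Module.finrank F2 U = n - d ∧ x ∉ U := by
  obtain ⟨j, hj⟩ : ∃ j, x j ≠ 0 := by
    by_contra h; push_neg at h; exact hx (funext h)
  obtain ⟨T, hTsub, hTcard⟩ := Finset.exists_subset_card_eq
    (s := Finset.univ.erase j) (n := n - d) (by
      rw [Finset.card_erase_of_mem (Finset.mem_univ j), Finset.card_univ, Fintype.card_fin]
      omega)
  set b : {i // i ∈ T} → (Fin n → F2) := fun i => Pi.basisFun F2 (Fin n) i.1 with hb
  have hli : LinearIndependent F2 b :=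
    (Pi.basisFun F2 (Fin n)).linearIndependent.comp _ Subtype.val_injective
  refine ⟨Submodule.span F2 (Set.range b), ?_, ?_⟩
  · rw [finrank_span_eq_card hli, Fintype.card_coe, hTcard]
  · intro hxU
    have hsub : Submodule.span F2 (Set.range b) ≤
        LinearMap.ker (LinearMap.proj j : (Fin n → F2) →ₗ[F2] F2) := by
      rw [Submodule.span_le]
      rintro _ ⟨i, rfl⟩
      have hij : (i : Fin n) ≠ j := Finset.ne_of_mem_erase (hTsub i.2)
      simp only [hb, LinearMap.mem_ker, LinearMap.proj_apply, Pi.basisFun_apply]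
      exact Pi.single_eq_of_ne (Ne.symm hij) 1
    have := hsub hxU
    simp only [LinearMap.mem_ker, LinearMap.proj_apply] at this
    exact hj this

lemma card_filter_mem (n r : ℕ) (S : AffineSubspace F2 (Fin n → F2))
    (hne : (S : Set (Fin n → F2)).Nonempty) (hr : Module.finrank F2 S.direction = r) :
    (Finset.univ.filter (fun x => x ∈ S)).card = 2 ^ r := by
  obtain ⟨p, hp⟩ := hne
  have e : {x // x ∈ S} ≃ S.direction :=
    { toFun := fun y => ⟨y.1 -ᵥ p, AffineSubspace.vsub_mem_direction y.2 hp⟩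
      invFun := fun v => ⟨v.1 +ᵥ p, AffineSubspace.vadd_mem_of_mem_direction v.2 hp⟩
      left_inv := fun y => by simp
      right_inv := fun v => by simp }
  rw [← Fintype.card_subtype, Fintype.card_congr e]
  have h2 := Module.card_eq_pow_finrank (K := F2) (V := S.direction)
  rw [h2, hr]
  norm_num

lemma sum_covCount (n : ℕ) (H : Multiset (AffineSubspace F2 (Fin n → F2))) :
    ∑ x : Fin n → F2, covCount n H x
      = (H.map (fun S => (Finset.univ.filter (fun x => x ∈ S)).card)).sum := by
  induction H using Multiset.induction_on with
  | empty => simp [covCount]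
  | cons S H ih =>
      simp only [covCount, Multiset.countP_cons, Multiset.map_cons, Multiset.sum_cons]
      rw [Finset.sum_add_distrib]
      rw [show (∑ x : Fin n → F2, Multiset.countP (fun T => x ∈ T) H) =
        (H.map (fun S => (Finset.univ.filter (fun x => x ∈ S)).card)).sum from ih]
      rw [Finset.sum_boole]
      push_cast
      ring

lemma arith_aux (A M B k s q : ℕ) (hB : 0 < B) (hk : k ≤ A * B)
    (hsP : s + (A * B - k) ≤ M * B) (hq : (k - s) / B = q) : A - q ≤ M := by
  by_cases hM : A ≤ M
  · exact le_trans (Nat.sub_le _ _) hM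
  · have key : (A - M) * B ≤ k - s := by
      rw [Nat.sub_mul]
      generalize hP : A * B = P at hk hsP ⊢
      generalize hC : M * B = C at hsP ⊢
      omega
    have h2 : A - M ≤ (k - s) / B := (Nat.le_div_iff_mul_le hB).2 key
    rw [hq] at h2
    omega

lemma cover_lower (n k d s : ℕ) (hd : 1 ≤ d) (hdn : d ≤ n) (hs : s < k)
    (H : Multiset (AffineSubspace F2 (Fin n → F2))) (hH : IsCoverExact n k d s H) :
    2 ^ d * k - (k - s) / 2 ^ (n - d) ≤ Multiset.card H := by
  obtain ⟨hdim, hcov, h0⟩ := hH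
  set B := 2 ^ (n - d) with hBdef
  have hB : 0 < B := Nat.two_pow_pos _
  have hsum : ∑ x : Fin n → F2, covCount n H x = Multiset.card H * B := by
    rw [sum_covCount]
    rw [Multiset.map_congr rfl (fun S hS =>
      card_filter_mem n (n - d) S (hdim S hS).1 (hdim S hS).2)]
    rw [Multiset.map_const', Multiset.sum_replicate, smul_eq_mul, mul_comm]
  have hcardfun : Fintype.card (Fin n → F2) = 2 ^ n := by
    rw [Fintype.card_fun]
    norm_num
  have hge : s + (2 ^ n - 1) * k ≤ Multiset.card H * B := by
    rw [← hsum]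
    have h1 : ∑ x ∈ (Finset.univ : Finset (Fin n → F2)).erase 0, covCount n H x
        + covCount n H 0 = ∑ x : Fin n → F2, covCount n H x :=
      Finset.sum_erase_add _ _ (Finset.mem_univ 0)
    have h2 : (2 ^ n - 1) * k ≤ ∑ x ∈ (Finset.univ : Finset (Fin n → F2)).erase 0,
        covCount n H x := by
      have hcard : ((Finset.univ : Finset (Fin n → F2)).erase 0).card = 2 ^ n - 1 := by
        rw [Finset.card_erase_of_mem (Finset.mem_univ 0), Finset.card_univ, hcardfun]
      calc (2 ^ n - 1) * k
          = ((Finset.univ : Finset (Fin n → F2)).erase 0).card * k := by rw [hcard]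
        _ ≤ _ := Finset.card_nsmul_le_sum _ _ _
              (fun x hx => hcov x (Finset.ne_of_mem_erase hx))
    omega
  have e1 : (2 ^ n - 1) * k = 2 ^ n * k - k := Nat.sub_one_mul _ _
  have e2 : 2 ^ d * k * B = 2 ^ n * k := by
    rw [mul_right_comm, ← pow_add]
    congr 2
    omega
  have hk : k ≤ 2 ^ d * k * B := by
    rw [e2]
    exact Nat.le_mul_of_pos_left k (Nat.two_pow_pos _)
  refine arith_aux (2 ^ d * k) (Multiset.card H) B k s _ hB hk ?_ rfl
  rw [e2, ← e1]
  exact hge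

lemma exists_cover (n k d s : ℕ) (hd : 1 ≤ d) (hdn : d ≤ n) (hs : s < k) :
    ∃ H, IsCoverExact n k d s H := by
  have hn : 1 ≤ n := le_trans hd hdn
  have hx0 : (Pi.single (⟨0, by omega⟩ : Fin n) (1 : F2)) ≠ (0 : Fin n → F2) := by
    intro h
    have := congrFun h ⟨0, by omega⟩
    simp at this
  obtain ⟨U0, hU0, -⟩ := exists_avoid n d hd hdn _ hx0
  have hav := fun (x : {x : Fin n → F2 // x ≠ 0}) => exists_avoid n d hd hdn x.1 x.2
  choose U hU1 hU2 using hav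
  set A0 := U0.toAffineSubspace with hA0
  set Sf : (Fin n → F2) → AffineSubspace F2 (Fin n → F2) := fun x =>
    if hx : x = 0 then A0 else x +ᵥ (U ⟨x, hx⟩).toAffineSubspace with hSf
  set M : Multiset (Fin n → F2) := (Finset.univ.filter (fun x : Fin n → F2 => x ≠ 0)).val
    with hM
  -- basic facts
  have hmemM : ∀ y : Fin n → F2, y ≠ 0 → y ∈ M := by
    intro y hy
    rw [hM, Finset.mem_val, Finset.mem_filter]
    exact ⟨Finset.mem_univ y, hy⟩
  have hmemM' : ∀ y ∈ M, y ≠ (0 : Fin n → F2) := by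
    intro y hy
    rw [hM, Finset.mem_val, Finset.mem_filter] at hy
    exact hy.2
  have hSfy : ∀ (y : Fin n → F2) (hy : y ≠ 0),
      Sf y = y +ᵥ (U ⟨y, hy⟩).toAffineSubspace := fun y hy => dif_neg hy
  have hself : ∀ (y : Fin n → F2) (hy : y ≠ 0), y ∈ Sf y := by
    intro y hy
    rw [hSfy y hy]
    have h0 : (0 : Fin n → F2) ∈ (U ⟨y, hy⟩).toAffineSubspace :=
      (Submodule.mem_toAffineSubspace).2 (Submodule.zero_mem _)
    have := (AffineSubspace.vadd_mem_pointwise_vadd_iff (v := y)).2 h0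
    simpa [vadd_eq_add] using this
  have hnozero : ∀ (y : Fin n → F2) (hy : y ≠ 0), (0 : Fin n → F2) ∉ Sf y := by
    intro y hy h0
    rw [hSfy y hy] at h0
    have : y +ᵥ (-y) ∈ y +ᵥ (U ⟨y, hy⟩).toAffineSubspace := by
      rwa [show y +ᵥ (-y) = (0 : Fin n → F2) by simp [vadd_eq_add]]
    have hmem := (AffineSubspace.vadd_mem_pointwise_vadd_iff (v := y)).1 this
    rw [Submodule.mem_toAffineSubspace, neg_mem_iff] at hmem
    exact hU2 ⟨y, hy⟩ hmem
  have hdir : ∀ (y : Fin n → F2) (hy : y ≠ 0),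
      Module.finrank F2 (Sf y).direction = n - d := by
    intro y hy
    rw [hSfy y hy]
    rw [AffineSubspace.pointwise_vadd_direction, Submodule.toAffineSubspace_direction]
    exact hU1 ⟨y, hy⟩
  have hA0dir : Module.finrank F2 A0.direction = n - d := by
    rw [hA0, Submodule.toAffineSubspace_direction]
    exact hU0
  have h0A0 : (0 : Fin n → F2) ∈ A0 := (Submodule.mem_toAffineSubspace).2 (Submodule.zero_mem _)
  refine ⟨Multiset.replicate s A0 + k • (M.map Sf), ?_, ?_, ?_⟩
  · intro S hS
    rcases Multiset.mem_add.1 hS with h | h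
    · rw [Multiset.eq_of_mem_replicate h]
      exact ⟨⟨0, h0A0⟩, hA0dir⟩
    · obtain ⟨y, hyM, rfl⟩ := Multiset.mem_map.1 (Multiset.mem_of_mem_nsmul h)
      have hy := hmemM' y hyM
      exact ⟨⟨y, hself y hy⟩, hdir y hy⟩
  · intro x hx
    unfold covCount
    rw [Multiset.countP_add, countP_nsmul']
    have hpos : 0 < Multiset.countP (fun S => x ∈ S) (M.map Sf) :=
      Multiset.countP_pos.2 ⟨Sf x, Multiset.mem_map.2 ⟨x, hmemM x hx, rfl⟩, hself x hx⟩
    have : k ≤ k * Multiset.countP (fun S => x ∈ S) (M.map Sf) :=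
      Nat.le_mul_of_pos_right k hpos
    omega
  · unfold covCount
    rw [Multiset.countP_add, countP_nsmul', countP_replicate']
    have hzero : Multiset.countP (fun S => (0 : Fin n → F2) ∈ S) (M.map Sf) = 0 := by
      rw [Multiset.countP_eq_zero]
      intro S hS
      obtain ⟨y, hyM, rfl⟩ := Multiset.mem_map.1 hS
      exact hnozero y (hmemM' y hyM)
    rw [hzero, if_pos h0A0]
    ring

end Aux

theorem stmt3 (n k d s : ℕ) (hd : 1 ≤ d) (hdn : d ≤ n) (hs : s < k) :
    2 ^ d * k - (k - s) / 2 ^ (n - d) ≤ g n k d s := by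
  obtain ⟨H0, hH0⟩ := exists_cover n k d s hd hdn hs
  have hne : {m | ∃ H, IsCoverExact n k d s H ∧ Multiset.card H = m}.Nonempty :=
    ⟨Multiset.card H0, H0, hH0, rfl⟩
  obtain ⟨H, hH, hcard⟩ := Nat.sInf_mem hne
  have := cover_lower n k d s hd hdn hs H hH
  rw [hcard] at this
  exact this
end

section
/- Let n, k, d, s be integers with n ≥ d ≥ 2 and k > s ≥ 0. Then g(n,k,d;s) ≤ g(n−d+1,k,1;s) + 2k·(2^(d−1) − 1). -/
open scoped Classical

noncomputable section MyAux

lemma my_countP_bind {α β : Type*} (s : Multiset α) (fm : α → Multiset β) (p : β → Prop)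
    [DecidablePred p] :
    Multiset.countP p (s.bind fm) = (s.map fun a => Multiset.countP p (fm a)).sum := by
  induction s using Multiset.induction with
  | empty => simp
  | cons a s ih => simp [Multiset.cons_bind, Multiset.countP_add, ih]

lemma my_countP_replicate {α : Type*} (p : α → Prop) [DecidablePred p] (a : α) (k : ℕ) :
    Multiset.countP p (Multiset.replicate k a) = if p a then k else 0 := by
  induction k with
  | zero => simp
  | succ k ih =>
      rw [Multiset.replicate_succ, Multiset.countP_cons, ih]
      by_cases h : p a <;> simp [h]

lemma my_countP_map {α β : Type*} (f : α → β) (s : Multiset α) (p : β → Prop)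
    [DecidablePred p] :
    Multiset.countP p (s.map f) = Multiset.countP (fun a => p (f a)) s := by
  rw [Multiset.countP_map, Multiset.countP_eq_card_filter]

variable {N : ℕ} {M : Type*} [AddCommGroup M] [Module F2 M]

lemma my_mem_hyper (φ : (Fin N → F2) →ₗ[F2] M) (p x : Fin N → F2) :
    x ∈ AffineSubspace.mk' p (LinearMap.ker φ) ↔ φ x = φ p := by
  rw [AffineSubspace.mem_mk', vsub_eq_sub, LinearMap.mem_ker, map_sub, sub_eq_zero]

lemma my_finrank_hyper [Module.Finite F2 M] (φ : (Fin N → F2) →ₗ[F2] M)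
    (hsurj : Function.Surjective φ) (p : Fin N → F2) :
    Module.finrank F2 (AffineSubspace.mk' p (LinearMap.ker φ)).direction
      = N - Module.finrank F2 M := by
  rw [AffineSubspace.direction_mk']
  have h := LinearMap.finrank_range_add_finrank_ker φ
  rw [LinearMap.range_eq_top.mpr hsurj, finrank_top] at h
  have hN : Module.finrank F2 (Fin N → F2) = N := by
    simp [Module.finrank_fintype_fun_eq_card]
  omega

/-- projection onto the first `m` coordinates. -/
def myPrj (n m : ℕ) (h : m ≤ n) : (Fin n → F2) →ₗ[F2] (Fin m → F2) :=
  LinearMap.funLeft F2 F2 (Fin.castLE h)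

/-- projection onto the last `n - m` coordinates. -/
def myTc (n m : ℕ) : (Fin n → F2) →ₗ[F2] (Fin (n - m) → F2) :=
  LinearMap.funLeft F2 F2 (fun j => ⟨m + j.1, by omega⟩)

/-- extension by zero. -/
def myIota (n m : ℕ) : (Fin m → F2) →ₗ[F2] (Fin n → F2) where
  toFun x := fun j => if hj : (j : ℕ) < m then x ⟨j, hj⟩ else 0
  map_add' a b := by funext j; by_cases hj : (j : ℕ) < m <;> simp [hj]
  map_smul' c a := by funext j; by_cases hj : (j : ℕ) < m <;> simp [hj]

lemma myTc_iota (n m : ℕ) (x : Fin m → F2) : myTc n m (myIota n m x) = 0 := by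
  funext j
  have : ¬ (m + j.1 < m) := by omega
  simp [myTc, myIota, LinearMap.funLeft_apply, this]

lemma myPrj_iota (n m : ℕ) (h : m ≤ n) (x : Fin m → F2) :
    myPrj n m h (myIota n m x) = x := by
  funext j
  simp [myPrj, myIota, LinearMap.funLeft_apply, Fin.castLE, j.2]

lemma myIota_prj (n m : ℕ) (h : m ≤ n) (x : Fin n → F2) (h0 : myTc n m x = 0) :
    myIota n m (myPrj n m h x) = x := by
  funext j
  by_cases hj : (j : ℕ) < m
  · simp [myIota, myPrj, LinearMap.funLeft_apply, hj, Fin.castLE]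
  · have hj2 : j.1 - m < n - m := by omega
    have := congrFun h0 ⟨j.1 - m, hj2⟩
    simp only [myTc, LinearMap.funLeft_apply, Pi.zero_apply] at this
    have hje : (⟨m + (j.1 - m), by omega⟩ : Fin n) = j := by
      apply Fin.ext; simp; omega
    rw [hje] at this
    simp [myIota, hj, this]

lemma myIota_inj (n m : ℕ) (h : m ≤ n) : Function.Injective (myIota n m) :=
  Function.LeftInverse.injective (myPrj_iota n m h)

lemma my_mem_lift (n m : ℕ) (h : m ≤ n) (S : AffineSubspace F2 (Fin m → F2))
    (x : Fin n → F2) :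
    x ∈ S.map (myIota n m).toAffineMap ↔ myTc n m x = 0 ∧ myPrj n m h x ∈ S := by
  rw [AffineSubspace.mem_map]
  constructor
  · rintro ⟨y, hy, rfl⟩
    refine ⟨myTc_iota n m y, ?_⟩
    simpa [myPrj_iota n m h y] using hy
  · rintro ⟨h0, hmem⟩
    exact ⟨myPrj n m h x, hmem, myIota_prj n m h x h0⟩

lemma my_finrank_lift (n m : ℕ) (h : m ≤ n) (S : AffineSubspace F2 (Fin m → F2)) :
    Module.finrank F2 (S.map (myIota n m).toAffineMap).direction
      = Module.finrank F2 S.direction := by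
  rw [AffineSubspace.map_direction]
  have : (myIota n m).toAffineMap.linear = myIota n m := rfl
  rw [this]
  exact (LinearEquiv.finrank_eq
    (Submodule.equivMapOfInjective (myIota n m) (myIota_inj n m h) S.direction)).symm

lemma myF2_cases (a : F2) : a = 0 ∨ a = 1 := by revert a; decide

lemma my_base_exists (m k s : ℕ) (hm : 1 ≤ m) : ∃ H, IsCoverExact m k 1 s H := by
  set A : Fin m → AffineSubspace F2 (Fin m → F2) := fun i =>
    AffineSubspace.mk' (Pi.single i 1) (LinearMap.ker (LinearMap.proj i)) with hA
  set A0 : AffineSubspace F2 (Fin m → F2) :=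
    AffineSubspace.mk' (0 : Fin m → F2)
      (LinearMap.ker (LinearMap.proj (⟨0, hm⟩ : Fin m))) with hA0
  have hmemA : ∀ (i : Fin m) (x : Fin m → F2), x ∈ A i ↔ x i = 1 := by
    intro i x
    rw [hA]
    rw [my_mem_hyper (LinearMap.proj i) (Pi.single i 1) x]
    simp
  have hmemA0 : ∀ (x : Fin m → F2), x ∈ A0 ↔ x ⟨0, hm⟩ = 0 := by
    intro x
    rw [hA0, my_mem_hyper]
    simp
  have hsurjP : ∀ i : Fin m, Function.Surjective (LinearMap.proj (R := F2) (φ := fun _ : Fin m => F2) i) := by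
    intro i c
    exact ⟨fun _ => c, rfl⟩
  have hrankA : ∀ i : Fin m, Module.finrank F2 (A i).direction = m - 1 := by
    intro i
    rw [hA]
    rw [my_finrank_hyper _ (hsurjP i)]
    simp [Module.finrank_self]
  have hrankA0 : Module.finrank F2 A0.direction = m - 1 := by
    rw [hA0, my_finrank_hyper _ (hsurjP _)]
    simp [Module.finrank_self]
  refine ⟨((Finset.univ : Finset (Fin m)).val.bind fun i => Multiset.replicate k (A i))
      + Multiset.replicate s A0, ?_, ?_, ?_⟩
  · intro S hS
    rw [Multiset.mem_add] at hS
    rcases hS with hS | hS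
    · rw [Multiset.mem_bind] at hS
      obtain ⟨i, _, hS⟩ := hS
      rw [Multiset.eq_of_mem_replicate hS]
      exact ⟨⟨_, AffineSubspace.self_mem_mk' _ _⟩, hrankA i⟩
    · rw [Multiset.eq_of_mem_replicate hS]
      exact ⟨⟨_, AffineSubspace.self_mem_mk' _ _⟩, hrankA0⟩
  · intro x hx
    have hex : ∃ i, x i = 1 := by
      by_contra hc
      push_neg at hc
      apply hx
      funext i
      rcases myF2_cases (x i) with h | h
      · exact h
      · exact absurd h (hc i)
    obtain ⟨i0, hi0⟩ := hex
    have hcount : covCount m (((Finset.univ : Finset (Fin m)).val.bind fun i =>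
        Multiset.replicate k (A i)) + Multiset.replicate s A0) x
        = (∑ i, if x i = 1 then k else 0) + (if x ⟨0, hm⟩ = 0 then s else 0) := by
      simp only [covCount, Multiset.countP_add, my_countP_bind, my_countP_replicate,
        hmemA, hmemA0]
      rfl
    rw [hcount]
    have hle := Finset.single_le_sum (f := fun i => if x i = 1 then k else 0)
      (fun i _ => Nat.zero_le _) (Finset.mem_univ i0)
    simp only [hi0, if_true, eq_self_iff_true] at hle
    omega
  · have hcount : covCount m (((Finset.univ : Finset (Fin m)).val.bind fun i =>
        Multiset.replicate k (A i)) + Multiset.replicate s A0) 0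
        = (∑ _i : Fin m, (0:ℕ)) + s := by
      simp only [covCount, Multiset.countP_add, my_countP_bind, my_countP_replicate,
        hmemA, hmemA0]
      simp
    rw [hcount]
    simp

end MyAux

theorem stmt4 (n k d s : ℕ) (hd : 2 ≤ d) (hdn : d ≤ n) (hs : s < k) :
    g n k d s ≤ g (n - d + 1) k 1 s + 2 * k * (2 ^ (d - 1) - 1) := by
  set m := n - d + 1 with hmdef
  have hmn : m ≤ n := by omega
  have hm1 : 1 ≤ m := by omega
  have htd : n - m = d - 1 := by omega
  have h0n : 0 < n := by omega
  have hne : {c | ∃ H, IsCoverExact m k 1 s H ∧ Multiset.card H = c}.Nonempty := by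
    obtain ⟨H, hH⟩ := my_base_exists m k s hm1
    exact ⟨Multiset.card H, H, hH, rfl⟩
  obtain ⟨H', hH', hcard'⟩ := Nat.sInf_mem hne
  obtain ⟨hH'dim, hH'cov, hH'zero⟩ := hH'
  have hgm : g m k 1 s = Multiset.card H' := hcard'.symm
  -- lifting map
  let ι := myIota n m
  let L : AffineSubspace F2 (Fin m → F2) → AffineSubspace F2 (Fin n → F2) :=
    fun S => S.map ι.toAffineMap
  let z : Fin n := ⟨0, h0n⟩
  let Φ : (Fin n → F2) →ₗ[F2] (F2 × (Fin (n - m) → F2)) :=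
    (LinearMap.proj z).prod (myTc n m)
  let pt : (Fin (n - m) → F2) → F2 → (Fin n → F2) := fun v c j =>
    if hj : (j : ℕ) < m then (if (j : ℕ) = 0 then c else 0)
    else v ⟨j.1 - m, by have := j.2; omega⟩
  have hΦapp : ∀ x : Fin n → F2, Φ x = (x z, myTc n m x) := fun _ => rfl
  have hΦpt : ∀ v c, Φ (pt v c) = (c, v) := by
    intro v c
    rw [hΦapp]
    have h1 : pt v c z = c := by
      show (if hj : (z : Fin n).1 < m then _ else _) = c
      rw [dif_pos (by show (0:ℕ) < m; omega)]
      simp [z]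
    have h2 : myTc n m (pt v c) = v := by
      funext j
      show pt v c ⟨m + j.1, _⟩ = v j
      have hj : ¬ (m + j.1 < m) := by omega
      show (if hj : m + j.1 < m then _ else v ⟨m + j.1 - m, _⟩) = v j
      rw [dif_neg hj]
      congr 1
      apply Fin.ext
      simp
    rw [h1, h2]
  have hsurjΦ : Function.Surjective Φ := by
    rintro ⟨c, v⟩
    exact ⟨pt v c, hΦpt v c⟩
  let B : (Fin (n - m) → F2) → F2 → AffineSubspace F2 (Fin n → F2) := fun v c =>
    AffineSubspace.mk' (pt v c) (LinearMap.ker Φ)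
  have hmemB : ∀ v c x, x ∈ B v c ↔ (x z = c ∧ myTc n m x = v) := by
    intro v c x
    rw [show B v c = AffineSubspace.mk' (pt v c) (LinearMap.ker Φ) from rfl,
      my_mem_hyper, hΦpt, hΦapp, Prod.ext_iff]
  have hrankB : ∀ v c, Module.finrank F2 (B v c).direction = n - d := by
    intro v c
    rw [show B v c = AffineSubspace.mk' (pt v c) (LinearMap.ker Φ) from rfl,
      my_finrank_hyper Φ hsurjΦ]
    have hprod : Module.finrank F2 (F2 × (Fin (n - m) → F2)) = 1 + (n - m) := by
      rw [Module.finrank_prod]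
      simp [Module.finrank_self, Module.finrank_fintype_fun_eq_card]
    rw [hprod]
    omega
  let V : Multiset (Fin (n - m) → F2) :=
    (Finset.univ.filter (fun v : Fin (n - m) → F2 => v ≠ 0)).val
  let E : Multiset (AffineSubspace F2 (Fin n → F2)) :=
    V.bind fun v => Multiset.replicate k (B v 0) + Multiset.replicate k (B v 1)
  let HL := H'.map L
  have hcardV : Multiset.card V = 2 ^ (d - 1) - 1 := by
    show (Finset.univ.filter (fun v : Fin (n - m) → F2 => v ≠ 0)).card = _
    rw [Finset.filter_ne' Finset.univ 0,
      Finset.card_erase_of_mem (Finset.mem_univ _), Finset.card_univ]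
    congr 1
    rw [Fintype.card_fun]
    simp [ZMod.card, htd]
  have hcardE : Multiset.card E = 2 * k * (2 ^ (d - 1) - 1) := by
    rw [show E = V.bind fun v => Multiset.replicate k (B v 0) + Multiset.replicate k (B v 1)
        from rfl, Multiset.card_bind]
    have hmc : V.map (Multiset.card ∘ fun v =>
        Multiset.replicate k (B v 0) + Multiset.replicate k (B v 1))
        = V.map (fun _ => 2 * k) := by
      apply Multiset.map_congr rfl
      intro v _
      simp [Function.comp]
      ring
    rw [hmc, Multiset.map_const', Multiset.sum_replicate, hcardV, smul_eq_mul]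
    ring
  have hcountL : ∀ x : Fin n → F2,
      Multiset.countP (fun S => x ∈ S) HL =
        (if myTc n m x = 0 then covCount m H' (myPrj n m hmn x) else 0) := by
    intro x
    rw [show HL = H'.map L from rfl, my_countP_map]
    by_cases h0 : myTc n m x = 0
    · rw [if_pos h0]
      apply Multiset.countP_congr rfl
      intro S _
      apply propext
      rw [show L S = S.map (myIota n m).toAffineMap from rfl, my_mem_lift n m hmn S x]
      exact ⟨fun h => h.2, fun h => ⟨h0, h⟩⟩
    · rw [if_neg h0]
      rw [Multiset.countP_eq_zero]
      intro S _ hc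
      rw [show L S = S.map (myIota n m).toAffineMap from rfl, my_mem_lift n m hmn S x] at hc
      exact h0 hc.1
  have hcountE : ∀ x : Fin n → F2,
      Multiset.countP (fun S => x ∈ S) E = (if myTc n m x = 0 then 0 else k) := by
    intro x
    rw [show E = V.bind fun v => Multiset.replicate k (B v 0) + Multiset.replicate k (B v 1)
        from rfl, my_countP_bind]
    have hterm : ∀ v ∈ V, Multiset.countP (fun S => x ∈ S)
        (Multiset.replicate k (B v 0) + Multiset.replicate k (B v 1))
        = (if x ∈ B v 0 then k else 0) + (if x ∈ B v 1 then k else 0) := by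
      intro v _
      rw [Multiset.countP_add, my_countP_replicate, my_countP_replicate]
    rw [Multiset.map_congr rfl hterm]
    have hfs : (V.map fun v => (if x ∈ B v 0 then k else 0) + (if x ∈ B v 1 then k else 0)).sum
        = ∑ v ∈ Finset.univ.filter (fun v : Fin (n - m) → F2 => v ≠ 0),
            ((if x ∈ B v 0 then k else 0) + (if x ∈ B v 1 then k else 0)) := rfl
    rw [hfs]
    by_cases h0 : myTc n m x = 0
    · rw [if_pos h0]
      apply Finset.sum_eq_zero
      intro v hv
      rw [Finset.mem_filter] at hv
      have hB : ∀ c, x ∉ B v c := by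
        intro c hc
        rw [hmemB] at hc
        exact hv.2 (hc.2.symm.trans h0)
      simp [hB 0, hB 1]
    · rw [if_neg h0]
      rw [Finset.sum_eq_single_of_mem (myTc n m x)
        (by rw [Finset.mem_filter]; exact ⟨Finset.mem_univ _, h0⟩)]
      · have hm0 : x ∈ B (myTc n m x) 0 ↔ x z = 0 := by rw [hmemB]; simp
        have hm1' : x ∈ B (myTc n m x) 1 ↔ x z = 1 := by rw [hmemB]; simp
        have h01 : (0 : F2) ≠ 1 := by decide
        rcases myF2_cases (x z) with h | h <;>
          simp [hm0, hm1', h, h01, h01.symm]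
      · intro v hv hvne
        have hB : ∀ c, x ∉ B v c := by
          intro c hc
          rw [hmemB] at hc
          exact hvne hc.2.symm
        simp [hB 0, hB 1]
  let H : Multiset (AffineSubspace F2 (Fin n → F2)) := HL + E
  have hcov : IsCoverExact n k d s H := by
    refine ⟨?_, ?_, ?_⟩
    · intro S hS
      rw [show H = HL + E from rfl, Multiset.mem_add] at hS
      rcases hS with hS | hS
      · rw [show HL = H'.map L from rfl, Multiset.mem_map] at hS
        obtain ⟨T, hT, rfl⟩ := hS
        constructor
        · obtain ⟨p, hp⟩ := (hH'dim T hT).1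
          exact ⟨ι.toAffineMap p, AffineSubspace.mem_map.mpr ⟨p, hp, rfl⟩⟩
        · rw [show L T = T.map (myIota n m).toAffineMap from rfl,
            my_finrank_lift n m hmn, (hH'dim T hT).2]
          omega
      · rw [show E = V.bind fun v =>
            Multiset.replicate k (B v 0) + Multiset.replicate k (B v 1) from rfl,
          Multiset.mem_bind] at hS
        obtain ⟨v, hv, hS⟩ := hS
        rw [Multiset.mem_add] at hS
        have hBS : S = B v 0 ∨ S = B v 1 := by
          rcases hS with h | h
          · exact Or.inl (Multiset.eq_of_mem_replicate h)
          · exact Or.inr (Multiset.eq_of_mem_replicate h)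
        rcases hBS with rfl | rfl <;>
          exact ⟨⟨_, AffineSubspace.self_mem_mk' _ _⟩, hrankB _ _⟩
    · intro x hx
      show k ≤ Multiset.countP (fun S => x ∈ S) (HL + E)
      rw [Multiset.countP_add, hcountL x, hcountE x]
      by_cases h0 : myTc n m x = 0
      · rw [if_pos h0, if_pos h0]
        have hpx : myPrj n m hmn x ≠ 0 := by
          intro hc
          apply hx
          have hxx := myIota_prj n m hmn x h0
          rw [hc, map_zero] at hxx
          exact hxx.symm
        have := hH'cov _ hpx
        omega
      · rw [if_neg h0, if_neg h0]
        omega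
    · show Multiset.countP (fun S => (0 : Fin n → F2) ∈ S) (HL + E) = s
      rw [Multiset.countP_add, hcountL 0, hcountE 0]
      have h0 : myTc n m (0 : Fin n → F2) = 0 := map_zero _
      rw [if_pos h0, if_pos h0]
      have hp0 : myPrj n m hmn (0 : Fin n → F2) = 0 := map_zero _
      rw [hp0, hH'zero]
      omega
  have hmem : Multiset.card H ∈ {c | ∃ H0, IsCoverExact n k d s H0 ∧ Multiset.card H0 = c} :=
    ⟨H, hcov, rfl⟩
  have hle : g n k d s ≤ Multiset.card H := Nat.sInf_le hmem
  have hcardH : Multiset.card H = Multiset.card H' + 2 * k * (2 ^ (d - 1) - 1) := by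
    rw [show H = HL + E from rfl, Multiset.card_add,
      show HL = H'.map L from rfl, Multiset.card_map, hcardE]
  rw [hcardH, ← hgm] at hle
  exact hle
end
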